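/- arXiv:1811.01285 — 7 statements merged into one kernel-verified Lean document; each statement's English description precedes it below -/
import Mathlib

section
/- Let A ∈ ℝ^{s×s} with s ≥ 2 be lower triangular with c = A e, let τ^(j) = A c^{j−1} − (1/j) c^j, and suppose a₁₁ = 0. If the second components satisfy τ^(2)_2 = 0 and τ^(3)_2 = 0, then c₂ = a₂₁ + a₂₂ = 0. (This is the key step showing that an irreducible DIRK scheme has stage order at most 2.) -/
lemma row_calc (n : ℕ) (A : Matrix (Fin (n + 2)) (Fin (n + 2)) ℝ)
    (hA : ∀ i j : Fin (n + 2), i < j → A i j = 0) (v : Fin (n + 2) → ℝ) :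
    A.mulVec v 1 = A 1 0 * v 0 + A 1 1 * v 1 := by
  simp only [Matrix.mulVec, dotProduct]
  rw [Fin.sum_univ_succ, Fin.sum_univ_succ]
  have : ∀ j : Fin n, A 1 j.succ.succ * v j.succ.succ = 0 := by
    intro j
    rw [hA]
    · ring
    · simp [Fin.lt_def]
  rw [Finset.sum_congr rfl (fun j _ => this j)]
  simp

lemma row0_calc (n : ℕ) (A : Matrix (Fin (n + 2)) (Fin (n + 2)) ℝ)
    (hA : ∀ i j : Fin (n + 2), i < j → A i j = 0) (v : Fin (n + 2) → ℝ) :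
    A.mulVec v 0 = A 0 0 * v 0 := by
  simp only [Matrix.mulVec, dotProduct]
  rw [Fin.sum_univ_succ]
  have : ∀ j : Fin (n + 1), A 0 j.succ * v j.succ = 0 := by
    intro j
    rw [hA]
    · ring
    · simp [Fin.lt_def]
  rw [Finset.sum_congr rfl (fun j _ => this j)]
  simp

/-- For a lower triangular `A` (with `s ≥ 2` stages), `c = A e`, and
`a₁₁ = 0`, if the second components of the stage order vectors satisfy
`τ^(2)_2 = 0` and `τ^(3)_2 = 0`, then `c₂ = a₂₁ + a₂₂ = 0`. -/
theorem dirk_stage_order_le_two_key_step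
    (n : ℕ) (A : Matrix (Fin (n + 2)) (Fin (n + 2)) ℝ)
    (hA : ∀ i j : Fin (n + 2), i < j → A i j = 0)
    (h11 : A 0 0 = 0)
    (c : Fin (n + 2) → ℝ) (hc : c = A.mulVec (fun _ => 1))
    (τ : ℕ → Fin (n + 2) → ℝ)
    (hτ : ∀ j : ℕ, 1 ≤ j → τ j = A.mulVec (c ^ (j - 1)) - ((j : ℝ))⁻¹ • c ^ j)
    (h2 : τ 2 1 = 0) (h3 : τ 3 1 = 0) :
    c 1 = 0 ∧ A 1 0 + A 1 1 = 0 := by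
  have hc0 : c 0 = 0 := by
    rw [hc, row0_calc n A hA, h11]; ring
  have hc1 : c 1 = A 1 0 + A 1 1 := by
    rw [hc, row_calc n A hA]; ring
  have e2 : A 1 1 * c 1 - (2 : ℝ)⁻¹ * (c 1) ^ 2 = 0 := by
    rw [hτ 2 (by norm_num)] at h2
    simpa [row_calc n A hA, hc0, pow_succ] using h2
  have e3 : A 1 1 * (c 1) ^ 2 - (3 : ℝ)⁻¹ * (c 1) ^ 3 = 0 := by
    rw [hτ 3 (by norm_num)] at h3
    simpa [row_calc n A hA, hc0, pow_succ] using h3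
  have e2' : A 1 1 * c 1 ^ 2 - (2 : ℝ)⁻¹ * c 1 ^ 3 = 0 := by
    linear_combination c 1 * e2
  have hcube : (c 1) ^ 3 = 0 := by linarith [e2', e3]
  have h0 : c 1 = 0 := pow_eq_zero_iff (n := 3) (by norm_num) |>.mp hcube
  exact ⟨h0, by linarith [hc1, h0]⟩
end

section
/- Let A ∈ ℝ^{s×s}, b ∈ ℝ^s, c = A e, and τ^(j) = A c^{j−1} − (1/j) c^j. There exists a subspace W ⊆ ℝ^s that is invariant under A, orthogonal to b, and contains τ^(j) for all 1 ≤ j ≤ q̃, if and only if bᵀ A^ℓ τ^(j) = 0 for all 0 ≤ ℓ ≤ s−1 and all 1 ≤ j ≤ q̃. -/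
open Matrix

lemma dot_pow_mulVec_zero {s : ℕ} (A : Matrix (Fin s) (Fin s) ℝ) (b v : Fin s → ℝ)
    (h : ∀ i : ℕ, i < s → b ⬝ᵥ (A ^ i).mulVec v = 0) :
    ∀ ℓ : ℕ, b ⬝ᵥ (A ^ ℓ).mulVec v = 0 := by
  rcases Nat.eq_zero_or_pos s with hs | hs
  · subst hs
    intro ℓ
    simp [dotProduct]
  · intro ℓ
    have hcard : Fintype.card (Fin s) = s := Fintype.card_fin s
    have hA : A ^ ℓ = Polynomial.aeval A (Polynomial.X ^ ℓ %ₘ A.charpoly) :=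
      Matrix.pow_eq_aeval_mod_charpoly A ℓ
    set p : Polynomial ℝ := Polynomial.X ^ ℓ %ₘ A.charpoly with hp
    have hdeg : p.natDegree < s := by
      by_cases hp0 : p = 0
      · simpa [hp0] using hs
      · have hdlt : p.degree < A.charpoly.degree :=
          Polynomial.degree_modByMonic_lt _ (Matrix.charpoly_monic A)
        have hcp : A.charpoly.degree = (s : WithBot ℕ) := by
          simpa [hcard] using A.charpoly_degree_eq_dim
        rw [hcp] at hdlt
        exact (Polynomial.natDegree_lt_iff_degree_lt hp0).2 hdlt
    have hsum : ∀ (t : Finset ℕ) (f : ℕ → Matrix (Fin s) (Fin s) ℝ),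
        b ⬝ᵥ (∑ i ∈ t, f i) *ᵥ v = ∑ i ∈ t, b ⬝ᵥ (f i *ᵥ v) := by
      intro t f
      induction t using Finset.cons_induction with
      | empty => simp
      | cons a t ha ih =>
        rw [Finset.sum_cons, Finset.sum_cons, Matrix.add_mulVec,
          dotProduct_add, ih]
    rw [hA, Polynomial.aeval_eq_sum_range' hdeg, hsum]
    refine Finset.sum_eq_zero fun i hi => ?_
    rw [Matrix.smul_mulVec, dotProduct_smul, h i (Finset.mem_range.mp hi),
      smul_zero]

/-- Weak stage order `q̃` (existence of an `A`-invariant subspace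
orthogonal to `b` containing `τ^(j)` for `1 ≤ j ≤ q̃`) is equivalent to the finite
set of conditions `bᵀ A^ℓ τ^(j) = 0` for `0 ≤ ℓ ≤ s-1`, `1 ≤ j ≤ q̃`. -/
theorem weak_stage_order_iff_finite_conditions
    (s : ℕ) (A : Matrix (Fin s) (Fin s) ℝ) (b : Fin s → ℝ)
    (c : Fin s → ℝ) (hc : c = A.mulVec (fun _ => 1))
    (τ : ℕ → Fin s → ℝ)
    (hτ : ∀ j : ℕ, 1 ≤ j → τ j = A.mulVec (c ^ (j - 1)) - ((j : ℝ))⁻¹ • c ^ j)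
    (qt : ℕ) :
    (∃ W : Submodule ℝ (Fin s → ℝ),
        (∀ v ∈ W, A.mulVec v ∈ W) ∧
        (∀ v ∈ W, b ⬝ᵥ v = 0) ∧
        (∀ j : ℕ, 1 ≤ j → j ≤ qt → τ j ∈ W)) ↔
    (∀ ℓ : ℕ, ℓ ≤ s - 1 → ∀ j : ℕ, 1 ≤ j → j ≤ qt →
        b ⬝ᵥ (A ^ ℓ).mulVec (τ j) = 0) := by
  constructor
  · rintro ⟨W, hinv, horth, hmem⟩ ℓ _ j hj1 hj2
    have hpow : ∀ k : ℕ, (A ^ k).mulVec (τ j) ∈ W := by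
      intro k
      induction k with
      | zero => simpa using hmem j hj1 hj2
      | succ n ih =>
        have : (A ^ (n + 1)).mulVec (τ j) = A.mulVec ((A ^ n).mulVec (τ j)) := by
          rw [Matrix.mulVec_mulVec, pow_succ']
        rw [this]
        exact hinv _ ih
    exact horth _ (hpow ℓ)
  · intro h
    set S : Set (Fin s → ℝ) :=
      {x | ∃ ℓ j : ℕ, 1 ≤ j ∧ j ≤ qt ∧ x = (A ^ ℓ).mulVec (τ j)} with hS
    refine ⟨Submodule.span ℝ S, ?_, ?_, ?_⟩
    · intro v hv
      induction hv using Submodule.span_induction with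
      | mem x hx =>
        obtain ⟨ℓ, j, hj1, hj2, rfl⟩ := hx
        apply Submodule.subset_span
        refine ⟨ℓ + 1, j, hj1, hj2, ?_⟩
        rw [Matrix.mulVec_mulVec, pow_succ']
      | zero => simp [Matrix.mulVec_zero]
      | add x y _ _ hx hy => rw [Matrix.mulVec_add]; exact Submodule.add_mem _ hx hy
      | smul a x _ hx => rw [Matrix.mulVec_smul]; exact Submodule.smul_mem _ _ hx
    · intro v hv
      induction hv using Submodule.span_induction with
      | mem x hx =>
        obtain ⟨ℓ, j, hj1, hj2, rfl⟩ := hx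
        refine dot_pow_mulVec_zero A b (τ j) (fun i hi => ?_) ℓ
        exact h i (Nat.le_sub_one_of_lt hi) j hj1 hj2
      | zero => simp
      | add x y _ _ hx hy => rw [dotProduct_add, hx, hy, add_zero]
      | smul a x _ hx => rw [dotProduct_smul, hx, smul_zero]
    · intro j hj1 hj2
      apply Submodule.subset_span
      exact ⟨0, j, hj1, hj2, by simp⟩
end

section
/- Let A ∈ ℝ^{s×s}, b ∈ ℝ^s, c = A e, and τ^(j) = A c^{j−1} − (1/j) c^j. Suppose there exists a subspace W ⊆ ℝ^s that is invariant under A, orthogonal to b, and contains τ^(j) for 1 ≤ j ≤ q̃. Then for every ζ ∈ ℝ such that the matrix I − ζA is invertible, and for every 1 ≤ j ≤ q̃, one has ζ·bᵀ(I − ζA)^{−1} τ^(j) = 0. -/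
open Matrix

/-- If there is an `A`-invariant subspace `W` orthogonal to `b`
containing the stage order vectors `τ^(j)` for `1 ≤ j ≤ q̃`, then the stiff
amplification factors `g^(j)(ζ) = ζ bᵀ(I - ζA)⁻¹ τ^(j)` vanish for every `ζ`
with `I - ζA` invertible. -/
theorem weak_stage_order_implies_g_vanishes
    (s : ℕ) (A : Matrix (Fin s) (Fin s) ℝ) (b : Fin s → ℝ)
    (c : Fin s → ℝ) (hc : c = A.mulVec (fun _ => 1))
    (τ : ℕ → Fin s → ℝ)
    (hτ : ∀ j : ℕ, 1 ≤ j → τ j = A.mulVec (c ^ (j - 1)) - ((j : ℝ))⁻¹ • c ^ j)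
    (qt : ℕ) (W : Submodule ℝ (Fin s → ℝ))
    (hWA : ∀ v ∈ W, A.mulVec v ∈ W)
    (hWb : ∀ v ∈ W, b ⬝ᵥ v = 0)
    (hWτ : ∀ j : ℕ, 1 ≤ j → j ≤ qt → τ j ∈ W) :
    ∀ ζ : ℝ, IsUnit (1 - ζ • A) → ∀ j : ℕ, 1 ≤ j → j ≤ qt →
      ζ * (b ⬝ᵥ (1 - ζ • A)⁻¹.mulVec (τ j)) = 0 := by
  intro ζ hζ j hj1 hjq
  set M : Matrix (Fin s) (Fin s) ℝ := 1 - ζ • A with hM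
  -- W is invariant under M
  have hWM : ∀ v ∈ W, M.mulVec v ∈ W := by
    intro v hv
    have : M.mulVec v = v - ζ • A.mulVec v := by
      simp [hM, sub_mulVec, smul_mulVec]
    rw [this]
    exact W.sub_mem hv (W.smul_mem ζ (hWA v hv))
  -- restriction of mulVec M to W
  let f : W →ₗ[ℝ] W := (Matrix.mulVecLin M).restrict hWM
  have hfinj : Function.Injective f := by
    intro x y hxy
    have h : M.mulVec (x : Fin s → ℝ) = M.mulVec (y : Fin s → ℝ) :=
      congrArg Subtype.val hxy
    have hinj : Function.Injective M.mulVec := by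
      intro u v huv
      have : M⁻¹.mulVec (M.mulVec u) = M⁻¹.mulVec (M.mulVec v) := by rw [huv]
      simpa [Matrix.mulVec_mulVec, Matrix.nonsing_inv_mul M
        ((Matrix.isUnit_iff_isUnit_det M).mp hζ)] using this
    exact Subtype.ext (hinj h)
  have hfsurj : Function.Surjective f :=
    LinearMap.surjective_of_injective hfinj
  obtain ⟨w, hw⟩ := hfsurj ⟨τ j, hWτ j hj1 hjq⟩
  have hw' : M.mulVec (w : Fin s → ℝ) = τ j := congrArg Subtype.val hw
  have key : M⁻¹.mulVec (τ j) = (w : Fin s → ℝ) := by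
    rw [← hw', Matrix.mulVec_mulVec, Matrix.nonsing_inv_mul M
      ((Matrix.isUnit_iff_isUnit_det M).mp hζ), Matrix.one_mulVec]
  rw [key, hWb _ w.2, mul_zero]
end

section
/- Let A ∈ ℝ^{s×s}, b ∈ ℝ^s, c = A e, and τ^(j) = A c^{j−1} − (1/j) c^j. Fix q̃ ≥ 1 and suppose there exists ε > 0 such that for all ζ ∈ (0, ε) the matrix I − ζA is invertible and bᵀ(I − ζA)^{−1} τ^(j) = 0 for every 1 ≤ j ≤ q̃. Then bᵀ A^ℓ τ^(j) = 0 for all integers ℓ ≥ 0 and all 1 ≤ j ≤ q̃; consequently the scheme has weak stage order q̃, i.e., the span of {A^ℓ τ^(j) : ℓ ≥ 0, 1 ≤ j ≤ q̃} is an A-invariant subspace orthogonal to b containing each τ^(j). -/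
open Matrix

/-- Auxiliary: the map `M ↦ b ⬝ᵥ M.mulVec v` as a linear map in `M`. -/
noncomputable def dotMulVecLin (s : ℕ) (b v : Fin s → ℝ) :
    Matrix (Fin s) (Fin s) ℝ →ₗ[ℝ] ℝ where
  toFun M := b ⬝ᵥ M.mulVec v
  map_add' M N := by simp [Matrix.add_mulVec, dotProduct_add]
  map_smul' r M := by simp [Matrix.smul_mulVec, dotProduct_smul]

/-- Key analytic lemma: if `bᵀ(I - ζA)⁻¹ v = 0` on an interval `(0, ε)` where the
resolvent exists, then all moments `bᵀ Aˡ v` vanish. -/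
lemma aux_resolvent_vanish (s : ℕ) (A : Matrix (Fin s) (Fin s) ℝ) (b v : Fin s → ℝ)
    (ε : ℝ) (hε : 0 < ε)
    (hU : ∀ ζ : ℝ, 0 < ζ → ζ < ε → IsUnit (1 - ζ • A))
    (h0 : ∀ ζ : ℝ, 0 < ζ → ζ < ε → b ⬝ᵥ (1 - ζ • A)⁻¹.mulVec v = 0) :
    ∀ ℓ : ℕ, b ⬝ᵥ (A ^ ℓ).mulVec v = 0 := by
  letI : SeminormedRing (Matrix (Fin s) (Fin s) ℝ) := Matrix.linftyOpSemiNormedRing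
  letI : NormedRing (Matrix (Fin s) (Fin s) ℝ) := Matrix.linftyOpNormedRing
  letI : NormedAlgebra ℝ (Matrix (Fin s) (Fin s) ℝ) := Matrix.linftyOpNormedAlgebra
  set g : ℕ → ℝ → ℝ :=
    fun ℓ ζ => b ⬝ᵥ ((1 - ζ • A)⁻¹ * A ^ ℓ).mulVec v with hg
  -- expansion of the resolvent
  have hexp : ∀ ζ : ℝ, 0 < ζ → ζ < ε → ∀ ℓ : ℕ,
      (1 - ζ • A)⁻¹ * A ^ ℓ = A ^ ℓ + ζ • ((1 - ζ • A)⁻¹ * A ^ (ℓ + 1)) := by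
    intro ζ hζ0 hζε ℓ
    have hu := hU ζ hζ0 hζε
    have hinv : (1 - ζ • A)⁻¹ * (1 - ζ • A) = 1 :=
      Matrix.nonsing_inv_mul _ ((Matrix.isUnit_iff_isUnit_det _).mp hu)
    have key : (1 - ζ • A)⁻¹ = 1 + ζ • ((1 - ζ • A)⁻¹ * A) := by
      have : (1 - ζ • A)⁻¹ * (1 - ζ • A) + ζ • ((1 - ζ • A)⁻¹ * A)
          = (1 - ζ • A)⁻¹ := by
        rw [mul_sub, mul_one, mul_smul_comm]
        abel
      rw [hinv] at this
      linear_combination (norm := module) -this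
    calc (1 - ζ • A)⁻¹ * A ^ ℓ
        = (1 + ζ • ((1 - ζ • A)⁻¹ * A)) * A ^ ℓ := by rw [← key]
      _ = A ^ ℓ + ζ • ((1 - ζ • A)⁻¹ * A ^ (ℓ + 1)) := by
          rw [add_mul, one_mul, smul_mul_assoc, mul_assoc, ← pow_succ']
  have hrec : ∀ ζ : ℝ, 0 < ζ → ζ < ε → ∀ ℓ : ℕ,
      g ℓ ζ = b ⬝ᵥ (A ^ ℓ).mulVec v + ζ * g (ℓ + 1) ζ := by
    intro ζ hζ0 hζε ℓ
    simp only [hg, hexp ζ hζ0 hζε ℓ, Matrix.add_mulVec, Matrix.smul_mulVec,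
      dotProduct_add, dotProduct_smul, smul_eq_mul]
  -- the main induction
  have main : ∀ ℓ : ℕ, (∀ ζ : ℝ, 0 < ζ → ζ < ε → g ℓ ζ = 0) := by
    intro ℓ
    induction ℓ with
    | zero =>
      intro ζ hζ0 hζε
      simpa [hg] using h0 ζ hζ0 hζε
    | succ ℓ ih =>
      -- first, `b ⬝ᵥ (A ^ ℓ).mulVec v = 0` via a limit argument
      set a : ℝ := b ⬝ᵥ (A ^ ℓ).mulVec v with ha
      have ha0 : a = 0 := by
        set φ : ℝ → ℝ := fun ζ =>
          ζ * dotMulVecLin s b v (Ring.inverse (1 - ζ • A) * A ^ (ℓ + 1)) with hφdef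
        have c1 : Continuous fun ζ : ℝ => 1 - ζ • A :=
          continuous_const.sub (continuous_id.smul continuous_const)
        have c2 : ContinuousAt (Ring.inverse :
            Matrix (Fin s) (Fin s) ℝ → Matrix (Fin s) (Fin s) ℝ)
            ((fun ζ : ℝ => 1 - ζ • A) 0) := by
          have := NormedRing.inverse_continuousAt (1 : (Matrix (Fin s) (Fin s) ℝ)ˣ)
          simp only [Units.val_one] at this
          simp only [zero_smul, sub_zero]
          exact this
        have c3 : ContinuousAt (fun ζ : ℝ => Ring.inverse (1 - ζ • A)) 0 :=
          ContinuousAt.comp (g := Ring.inverse) c2 c1.continuousAt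
        have cφ : ContinuousAt φ 0 := by
          apply continuousAt_id.mul
          exact ((dotMulVecLin s b v).continuous_of_finiteDimensional.continuousAt).comp
            (c3.mul continuousAt_const)
        have hφ0 : φ 0 = 0 := by simp [hφdef]
        have htend : Filter.Tendsto φ (nhdsWithin 0 (Set.Ioi 0)) (nhds 0) := by
          have := cφ.tendsto.mono_left (nhdsWithin_le_nhds (s := Set.Ioi (0 : ℝ)))
          rwa [hφ0] at this
        have heq : ∀ ζ ∈ Set.Ioo (0 : ℝ) ε, φ ζ = -a := by
          intro ζ hζ
          have hζ0 := hζ.1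
          have hζε := hζ.2
          have hring : Ring.inverse (1 - ζ • A) = (1 - ζ • A)⁻¹ :=
            (Matrix.nonsing_inv_eq_ringInverse _).symm
          have h1 : φ ζ = ζ * g (ℓ + 1) ζ := by
            simp [hφdef, hring, hg, dotMulVecLin]
          have h2 : g ℓ ζ = a + ζ * g (ℓ + 1) ζ := hrec ζ hζ0 hζε ℓ
          rw [ih ζ hζ0 hζε] at h2
          rw [h1]
          linarith
        have hmem : Set.Ioo (0 : ℝ) ε ∈ nhdsWithin (0 : ℝ) (Set.Ioi 0) :=
          Ioo_mem_nhdsGT_of_mem (by constructor <;> simp [hε, le_refl])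
        have htend' : Filter.Tendsto (fun _ : ℝ => -a)
            (nhdsWithin 0 (Set.Ioi 0)) (nhds 0) := by
          apply htend.congr'
          filter_upwards [hmem] with ζ hζ using heq ζ hζ
        have : -a = 0 := tendsto_nhds_unique tendsto_const_nhds htend'
        linarith
      intro ζ hζ0 hζε
      have h2 : g ℓ ζ = a + ζ * g (ℓ + 1) ζ := hrec ζ hζ0 hζε ℓ
      rw [ih ζ hζ0 hζε, ha0] at h2
      have h3 : ζ * g (ℓ + 1) ζ = 0 := by linarith
      exact (mul_eq_zero.mp h3).resolve_left (ne_of_gt hζ0)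
  -- conclude
  intro ℓ
  have h2 : g ℓ (ε / 2) = b ⬝ᵥ (A ^ ℓ).mulVec v + (ε / 2) * g (ℓ + 1) (ε / 2) :=
    hrec (ε / 2) (by linarith) (by linarith) ℓ
  rw [main ℓ (ε / 2) (by linarith) (by linarith),
    main (ℓ + 1) (ε / 2) (by linarith) (by linarith)] at h2
  linarith

/-- If `bᵀ(I - ζA)⁻¹ τ^(j) = 0` for all `ζ` in some interval `(0, ε)`
(on which `I - ζA` is invertible) and all `1 ≤ j ≤ q̃`, then `bᵀ A^ℓ τ^(j) = 0` for
all `ℓ ≥ 0` and `1 ≤ j ≤ q̃`; consequently the span of `{A^ℓ τ^(j)}` is an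
`A`-invariant subspace orthogonal to `b` containing each `τ^(j)`, i.e. the scheme
has weak stage order `q̃`. -/
theorem g_vanishes_implies_weak_stage_order
    (s : ℕ) (A : Matrix (Fin s) (Fin s) ℝ) (b : Fin s → ℝ)
    (c : Fin s → ℝ) (hc : c = A.mulVec (fun _ => 1))
    (τ : ℕ → Fin s → ℝ)
    (hτ : ∀ j : ℕ, 1 ≤ j → τ j = A.mulVec (c ^ (j - 1)) - ((j : ℝ))⁻¹ • c ^ j)
    (qt : ℕ) (hqt : 1 ≤ qt)
    (ε : ℝ) (hε : 0 < ε)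
    (h : ∀ ζ : ℝ, 0 < ζ → ζ < ε → IsUnit (1 - ζ • A) ∧
        ∀ j : ℕ, 1 ≤ j → j ≤ qt → b ⬝ᵥ (1 - ζ • A)⁻¹.mulVec (τ j) = 0) :
    (∀ ℓ : ℕ, ∀ j : ℕ, 1 ≤ j → j ≤ qt → b ⬝ᵥ (A ^ ℓ).mulVec (τ j) = 0) ∧
    (∀ v ∈ Submodule.span ℝ
        {v | ∃ ℓ : ℕ, ∃ j : ℕ, 1 ≤ j ∧ j ≤ qt ∧ v = (A ^ ℓ).mulVec (τ j)},
      A.mulVec v ∈ Submodule.span ℝ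
        {v | ∃ ℓ : ℕ, ∃ j : ℕ, 1 ≤ j ∧ j ≤ qt ∧ v = (A ^ ℓ).mulVec (τ j)}) ∧
    (∀ v ∈ Submodule.span ℝ
        {v | ∃ ℓ : ℕ, ∃ j : ℕ, 1 ≤ j ∧ j ≤ qt ∧ v = (A ^ ℓ).mulVec (τ j)},
      b ⬝ᵥ v = 0) ∧
    (∀ j : ℕ, 1 ≤ j → j ≤ qt → τ j ∈ Submodule.span ℝ
        {v | ∃ ℓ : ℕ, ∃ j : ℕ, 1 ≤ j ∧ j ≤ qt ∧ v = (A ^ ℓ).mulVec (τ j)}) := by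
  have key : ∀ ℓ : ℕ, ∀ j : ℕ, 1 ≤ j → j ≤ qt → b ⬝ᵥ (A ^ ℓ).mulVec (τ j) = 0 := by
    intro ℓ j hj1 hjq
    exact aux_resolvent_vanish s A b (τ j) ε hε
      (fun ζ h0 h1 => (h ζ h0 h1).1)
      (fun ζ h0 h1 => (h ζ h0 h1).2 j hj1 hjq) ℓ
  refine ⟨key, ?_, ?_, ?_⟩
  · -- A-invariance
    intro v hv
    induction hv using Submodule.span_induction with
    | mem x hx =>
      obtain ⟨ℓ, j, hj1, hjq, rfl⟩ := hx
      apply Submodule.subset_span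
      exact ⟨ℓ + 1, j, hj1, hjq, by rw [Matrix.mulVec_mulVec, ← pow_succ']⟩
    | zero => simp
    | add x y hx hy ihx ihy =>
      rw [Matrix.mulVec_add]; exact Submodule.add_mem _ ihx ihy
    | smul r x hx ihx =>
      rw [Matrix.mulVec_smul]; exact Submodule.smul_mem _ _ ihx
  · -- orthogonality to b
    intro v hv
    induction hv using Submodule.span_induction with
    | mem x hx =>
      obtain ⟨ℓ, j, hj1, hjq, rfl⟩ := hx
      exact key ℓ j hj1 hjq
    | zero => simp
    | add x y hx hy ihx ihy => rw [dotProduct_add, ihx, ihy, add_zero]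
    | smul r x hx ihx => rw [dotProduct_smul, ihx, smul_zero]
  · -- contains τ j
    intro j hj1 hjq
    apply Submodule.subset_span
    exact ⟨0, j, hj1, hjq, by rw [pow_zero, Matrix.one_mulVec]⟩
end

section
/- Let A ∈ ℝ^{s×s} be lower triangular with a₁₁ ≠ 0, c = A e, and τ^(j) = A c^{j−1} − (1/j) c^j. If for some j ≥ 2 and μ ∈ ℝ one has A τ^(j) = μ τ^(j), then μ = a₁₁. -/
open Matrix

/-- For a lower triangular `A` with `a₁₁ ≠ 0` and `c = A e`, if the
stage order vector `τ^(j)` (for some `j ≥ 2`) is an eigenvector of `A` with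
eigenvalue `μ`, then `μ = a₁₁`. -/
theorem eigenvalue_must_be_a11
    (n : ℕ) (A : Matrix (Fin (n + 1)) (Fin (n + 1)) ℝ)
    (hA : ∀ i j : Fin (n + 1), i < j → A i j = 0)
    (ha : A 0 0 ≠ 0)
    (c : Fin (n + 1) → ℝ) (hc : c = A.mulVec (fun _ => 1))
    (τ : ℕ → Fin (n + 1) → ℝ)
    (hτ : ∀ j : ℕ, 1 ≤ j → τ j = A.mulVec (c ^ (j - 1)) - ((j : ℝ))⁻¹ • c ^ j)
    (j : ℕ) (hj : 2 ≤ j) (μ : ℝ)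
    (hev : A.mulVec (τ j) = μ • τ j) :
    μ = A 0 0 := by
  set a := A 0 0 with haa
  have hmv : ∀ v : Fin (n + 1) → ℝ, A.mulVec v 0 = a * v 0 := by
    intro v
    simp only [mulVec, dotProduct]
    rw [Finset.sum_eq_single 0]
    · intro b _ hb
      rw [hA 0 b (by exact (Fin.pos_of_ne_zero hb)), zero_mul]
    · intro h; exact absurd (Finset.mem_univ 0) h
  have hc0 : c 0 = a := by rw [hc, hmv]; ring
  have hτ0 : τ j 0 = a ^ j * (1 - (j : ℝ)⁻¹) := by
    rw [hτ j (by omega)]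
    simp only [Pi.sub_apply, Pi.smul_apply, Pi.pow_apply, smul_eq_mul, hmv, hc0]
    rw [← pow_succ']
    have : j - 1 + 1 = j := by omega
    rw [this]; ring
  have hne : τ j 0 ≠ 0 := by
    rw [hτ0]
    apply mul_ne_zero (pow_ne_zero _ ha)
    have h1 : (j : ℝ)⁻¹ < 1 := by
      rw [inv_lt_one_iff₀]
      right
      exact_mod_cast by omega
    intro h; linarith
  have := congrFun hev 0
  rw [hmv, Pi.smul_apply, smul_eq_mul] at this
  exact (mul_right_cancel₀ hne this.symm)
end

section
/- For j ≥ 2 define F_j(a₁₁, a₂₁, a₂₂) := (1 − 1/j)·a₁₁^j·a₂₁ + (a₂₂ − a₁₁)·(a₁₁^{j−1} a₂₁ + (a₂₁ + a₂₂)^{j−1} a₂₂ − (1/j)(a₂₁ + a₂₂)^j). The points P₁ = (3√2 − 4, 1, √2 − 1) and P₂ = (−(√2+1)(√2+2), 1, −(√2+1)) satisfy F₂ = 0 and F₃ = 0; moreover neither P₁ nor P₂ lies on the equal-time line a₁₁ = a₂₁ + a₂₂. -/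
/-- The polynomial `F_j(a₁₁, a₂₁, a₂₂)` arising as the second component of
`A τ^(j) - a₁₁ τ^(j)` for a 2×2 lower triangular RK matrix. -/
noncomputable def F (j : ℕ) (a11 a21 a22 : ℝ) : ℝ :=
  (1 - ((j : ℝ))⁻¹) * a11 ^ j * a21 +
    (a22 - a11) * (a11 ^ (j - 1) * a21 + (a21 + a22) ^ (j - 1) * a22
      - ((j : ℝ))⁻¹ * (a21 + a22) ^ j)

/-- The points `P₁ = (3√2 - 4, 1, √2 - 1)` and
`P₂ = (-(√2+1)(√2+2), 1, -(√2+1))` satisfy `F₂ = 0` and `F₃ = 0`, and neither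
lies on the equal-time line `a₁₁ = a₂₁ + a₂₂`. -/
theorem P1_P2_satisfy_F2_F3_not_equal_time :
    F 2 (3 * Real.sqrt 2 - 4) 1 (Real.sqrt 2 - 1) = 0 ∧
    F 3 (3 * Real.sqrt 2 - 4) 1 (Real.sqrt 2 - 1) = 0 ∧
    F 2 (-((Real.sqrt 2 + 1) * (Real.sqrt 2 + 2))) 1 (-(Real.sqrt 2 + 1)) = 0 ∧
    F 3 (-((Real.sqrt 2 + 1) * (Real.sqrt 2 + 2))) 1 (-(Real.sqrt 2 + 1)) = 0 ∧
    3 * Real.sqrt 2 - 4 ≠ 1 + (Real.sqrt 2 - 1) ∧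
    -((Real.sqrt 2 + 1) * (Real.sqrt 2 + 2)) ≠ 1 + (-(Real.sqrt 2 + 1)) := by
  have hs : Real.sqrt 2 ^ 2 = 2 := Real.sq_sqrt (by norm_num)
  have hpos : 0 ≤ Real.sqrt 2 := Real.sqrt_nonneg 2
  refine ⟨?_, ?_, ?_, ?_, ?_, ?_⟩
  · simp only [F]; norm_num
    linear_combination (7/2 - 2 * Real.sqrt 2) * hs
  · simp only [F]; norm_num
    linear_combination (1/3 - Real.sqrt 2 + 2/3 * Real.sqrt 2 ^ 2) * hs
  · simp only [F]; norm_num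
    linear_combination (1/2 + Real.sqrt 2 + 1/2 * Real.sqrt 2 ^ 2) * hs
  · simp only [F]; norm_num
    linear_combination (5/3 + 5 * Real.sqrt 2 + 16/3 * Real.sqrt 2 ^ 2
      + 7/3 * Real.sqrt 2 ^ 3 + 1/3 * Real.sqrt 2 ^ 4) * hs
  · intro h; nlinarith [hs, hpos]
  · intro h; nlinarith [hs, hpos]
end

section
/- Let A ∈ ℝ^{s×s} be lower triangular with all diagonal entries nonzero (so A is invertible), let b ∈ ℝ^s satisfy bᵀe = 1, let c = A e, and let τ^(j) = A c^{j−1} − (1/j) c^j. Then the scheme cannot satisfy the weak stage order eigenvector criterion of order 4: it is impossible that for every j ∈ {1, 2, 3, 4} there exists μⱼ ∈ ℝ with A τ^(j) = μⱼ τ^(j) and bᵀ τ^(j) = 0. In other words, DIRK schemes with invertible A have q̃ₑ ≤ 3. -/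
open Matrix

/-- Row-level algebra: the three eigen-equations for `j = 2,3,4` at a row with
partial row sum `S`, diagonal `d ≠ 0`, abscissa `x = S + d`, force `x = L`. -/
private lemma rowAlg (L d S x : ℝ) (hL : L ≠ 0) (hd : d ≠ 0) (hx : x = S + d)
    (h2 : S * (L ^ 2 - ((1:ℝ)/2) * L ^ 2) + d * (S * L + d * x - ((1:ℝ)/2) * x ^ 2)
        = L * (S * L + d * x - ((1:ℝ)/2) * x ^ 2))
    (h3 : S * (L ^ 3 - ((1:ℝ)/3) * L ^ 3) + d * (S * L ^ 2 + d * x ^ 2 - ((1:ℝ)/3) * x ^ 3)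
        = L * (S * L ^ 2 + d * x ^ 2 - ((1:ℝ)/3) * x ^ 3))
    (h4 : S * (L ^ 4 - ((1:ℝ)/4) * L ^ 4) + d * (S * L ^ 3 + d * x ^ 3 - ((1:ℝ)/4) * x ^ 4)
        = L * (S * L ^ 3 + d * x ^ 3 - ((1:ℝ)/4) * x ^ 4)) : x = L := by
  have hd' : d = x - S := by linarith
  subst hd'
  have master : 3 * L ^ 2 * x ^ 2 * (L - x) = 0 := by
    linear_combination (-(6:ℝ) * (L ^ 2 + 4 * L * x + x ^ 2)) * h2 + (18 * (L + x)) * h3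
      + (-(12:ℝ)) * h4
  have hx0 : x ^ 2 * (L - x) = 0 := by
    have h3L : (3:ℝ) * L ^ 2 ≠ 0 := by positivity
    have : (3 * L ^ 2) * (x ^ 2 * (L - x)) = 0 := by linarith [master]
    exact (mul_eq_zero.mp this).resolve_left h3L
  rcases mul_eq_zero.mp hx0 with h | h
  · exfalso
    have hxz : x = 0 := by
      have := pow_eq_zero_iff (n := 2) (by norm_num) |>.mp h
      exact this
    subst hxz
    have hS : S * L ^ 3 = 0 := by linear_combination (-(6:ℝ) * L) * h2 + (6:ℝ) * h3
    have hSz : S = 0 := by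
      rcases mul_eq_zero.mp hS with h' | h'
      · exact h'
      · exact absurd (pow_eq_zero_iff (n := 3) (by norm_num) |>.mp h') hL
    apply hd
    rw [hSz]
    ring
  · linarith

/-- A DIRK scheme (lower triangular `A`) with all diagonal entries
nonzero and consistent weights (`bᵀe = 1`) cannot satisfy the weak stage order
eigenvector criterion of order 4: it is impossible that for each `1 ≤ j ≤ 4`
there is `μⱼ` with `A τ^(j) = μⱼ τ^(j)` and `bᵀ τ^(j) = 0`. Thus `q̃ₑ ≤ 3`. -/
theorem dirk_eigenvector_criterion_at_most_three
    (s : ℕ) (A : Matrix (Fin s) (Fin s) ℝ)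
    (hA : ∀ i j : Fin s, i < j → A i j = 0)
    (hdiag : ∀ i : Fin s, A i i ≠ 0)
    (b : Fin s → ℝ) (hb : b ⬝ᵥ (fun _ => 1) = 1)
    (c : Fin s → ℝ) (hc : c = A.mulVec (fun _ => 1))
    (τ : ℕ → Fin s → ℝ)
    (hτ : ∀ j : ℕ, 1 ≤ j → τ j = A.mulVec (c ^ (j - 1)) - ((j : ℝ))⁻¹ • c ^ j) :
    ¬ (∀ j : ℕ, 1 ≤ j → j ≤ 4 →
        ∃ μ : ℝ, A.mulVec (τ j) = μ • τ j ∧ b ⬝ᵥ τ j = 0) := by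
  intro H
  -- s is positive
  have hs : 0 < s := by
    rcases Nat.eq_zero_or_pos s with h | h
    · exfalso; subst h; simp [dotProduct] at hb
    · exact h
  set i0 : Fin s := ⟨0, hs⟩ with hi0
  set L : ℝ := A i0 i0 with hLdef
  have hL : L ≠ 0 := hdiag i0
  -- mulVec of a lower triangular matrix
  have hmv : ∀ (v : Fin s → ℝ) (i : Fin s),
      A.mulVec v i = (∑ k ∈ Finset.Iio i, A i k * v k) + A i i * v i := by
    intro v i
    have h1 : A.mulVec v i = ∑ k ∈ Finset.Iic i, A i k * v k := by
      rw [Matrix.mulVec, dotProduct]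
      refine (Finset.sum_subset (Finset.subset_univ _) ?_).symm
      intro k _ hk
      rw [hA i k (by simpa [Finset.mem_Iic, not_le] using hk), zero_mul]
    rw [h1, ← Finset.Iio_insert i, Finset.sum_insert (by simp)]
    ring
  have hcv : ∀ i : Fin s, c i = (∑ k ∈ Finset.Iio i, A i k) + A i i := by
    intro i
    rw [hc, hmv]
    simp
  have hτv : ∀ j : ℕ, 1 ≤ j → ∀ i : Fin s,
      τ j i = (∑ k ∈ Finset.Iio i, A i k * (c k) ^ (j - 1)) + A i i * (c i) ^ (j - 1)
        - ((j : ℝ))⁻¹ * (c i) ^ j := by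
    intro j hj i
    have := congrFun (hτ j hj) i
    simpa [hmv, smul_eq_mul] using this
  -- if all abscissae up to k equal L, then τ j k is explicit
  have hτconst : ∀ j : ℕ, 1 ≤ j → ∀ k : Fin s, (∀ l : Fin s, l ≤ k → c l = L) →
      τ j k = L ^ j - ((j : ℝ))⁻¹ * L ^ j := by
    intro j hj k hck
    rw [hτv j hj k]
    have h1 : ∑ l ∈ Finset.Iio k, A k l * (c l) ^ (j - 1)
        = (∑ l ∈ Finset.Iio k, A k l) * L ^ (j - 1) := by
      rw [Finset.sum_mul]
      exact Finset.sum_congr rfl fun l hl => by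
        rw [hck l (le_of_lt (Finset.mem_Iio.mp hl))]
    have h2 : (∑ l ∈ Finset.Iio k, A k l) = L - A k k := by
      have := hcv k
      rw [hck k le_rfl] at this
      linarith
    rw [h1, h2, hck k le_rfl]
    have hp : L * L ^ (j - 1) = L ^ j := by
      conv_rhs => rw [← Nat.sub_add_cancel hj]
      rw [pow_succ]
      ring
    linear_combination hp
  -- eigen equation, componentwise
  have heig : ∀ (j : ℕ) (μ : ℝ), A.mulVec (τ j) = μ • τ j → ∀ i : Fin s,
      (∑ k ∈ Finset.Iio i, A i k * τ j k) + A i i * τ j i = μ * τ j i := by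
    intro j μ h i
    have h' := congrFun h i
    rw [hmv] at h'
    simpa [smul_eq_mul] using h'
  -- abscissa at row 0
  have hIio0 : Finset.Iio i0 = ∅ := by
    ext k
    simp [Finset.mem_Iio, Fin.lt_def, -Fin.val_fin_lt]
    exact Fin.mk_le_of_le_val (Nat.zero_le _)
  have hci0 : c i0 = L := by
    rw [hcv i0, hIio0]
    simp [hLdef]
  -- each eigenvalue equals L
  have hmuL : ∀ (j : ℕ), 2 ≤ j → ∀ μ : ℝ, A.mulVec (τ j) = μ • τ j → μ = L := by
    intro j hj μ h
    have hτ0 : τ j i0 = L ^ j - ((j : ℝ))⁻¹ * L ^ j := by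
      refine hτconst j (by omega) i0 fun l hl => ?_
      have : l = i0 := le_antisymm hl (by exact Fin.mk_le_of_le_val (Nat.zero_le _))
      rw [this, hci0]
    have hτ0ne : τ j i0 ≠ 0 := by
      rw [hτ0]
      have hj1 : (1:ℝ) ≤ (j : ℝ) / 2 := by
        have : (2:ℝ) ≤ (j : ℝ) := by exact_mod_cast hj
        linarith
      have hinv : ((j : ℝ))⁻¹ < 1 := by
        rw [inv_lt_one_iff₀]
        right
        have : (2:ℝ) ≤ (j : ℝ) := by exact_mod_cast hj
        linarith
      have hpow : L ^ j ≠ 0 := pow_ne_zero j hL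
      intro hzero
      have : L ^ j * (1 - ((j : ℝ))⁻¹) = 0 := by linarith
      rcases mul_eq_zero.mp this with h' | h'
      · exact hpow h'
      · linarith
    have h0 := heig j μ h i0
    rw [hIio0] at h0
    simp only [Finset.sum_empty, zero_add] at h0
    have : (L - μ) * τ j i0 = 0 := by
      rw [hLdef]
      linarith
    rcases mul_eq_zero.mp this with h' | h'
    · linarith
    · exact absurd h' hτ0ne
  -- extract the eigen data
  obtain ⟨μ2, hμ2, hb2⟩ := H 2 (by norm_num) (by norm_num)
  obtain ⟨μ3, hμ3, _⟩ := H 3 (by norm_num) (by norm_num)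
  obtain ⟨μ4, hμ4, _⟩ := H 4 (by norm_num) (by norm_num)
  have hμ2L : μ2 = L := hmuL 2 le_rfl μ2 hμ2
  have hμ3L : μ3 = L := hmuL 3 (by norm_num) μ3 hμ3
  have hμ4L : μ4 = L := hmuL 4 (by norm_num) μ4 hμ4
  rw [hμ2L] at hμ2; rw [hμ3L] at hμ3; rw [hμ4L] at hμ4
  -- all abscissae equal L, by strong induction
  have key : ∀ n : ℕ, ∀ hn : n < s, c ⟨n, hn⟩ = L := by
    intro n
    induction n using Nat.strong_induction_on with
    | _ n IH =>
      intro hn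
      set i : Fin s := ⟨n, hn⟩ with hidef
      have IHc : ∀ k : Fin s, k < i → c k = L := by
        intro k hk
        have hkn : k.val < n := hk
        have := IH k.val hkn k.isLt
        simpa using this
      set S : ℝ := ∑ k ∈ Finset.Iio i, A i k with hSdef
      set d : ℝ := A i i with hddef
      set x : ℝ := c i with hxdef
      have hdne : d ≠ 0 := hdiag i
      have hxSd : x = S + d := hcv i
      have hτi : ∀ j : ℕ, 1 ≤ j →
          τ j i = S * L ^ (j - 1) + d * x ^ (j - 1) - ((j : ℝ))⁻¹ * x ^ j := by
        intro j hj
        rw [hτv j hj i]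
        have h1 : ∑ k ∈ Finset.Iio i, A i k * (c k) ^ (j - 1) = S * L ^ (j - 1) := by
          rw [hSdef, Finset.sum_mul]
          exact Finset.sum_congr rfl fun k hk => by
            rw [IHc k (Finset.mem_Iio.mp hk)]
        rw [h1]
      have heqj : ∀ j : ℕ, 1 ≤ j → ∀ μ : ℝ, A.mulVec (τ j) = μ • τ j →
          S * (L ^ j - ((j : ℝ))⁻¹ * L ^ j) + d * τ j i = μ * τ j i := by
        intro j hj μ h
        have h' := heig j μ h i
        have hsum : ∑ k ∈ Finset.Iio i, A i k * τ j k
            = S * (L ^ j - ((j : ℝ))⁻¹ * L ^ j) := by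
          rw [hSdef, Finset.sum_mul]
          refine Finset.sum_congr rfl fun k hk => ?_
          rw [hτconst j hj k fun l hl =>
            IHc l (lt_of_le_of_lt hl (Finset.mem_Iio.mp hk))]
        rw [hsum] at h'
        exact h'
      have e2 := heqj 2 (by norm_num) L hμ2
      have e3 := heqj 3 (by norm_num) L hμ3
      have e4 := heqj 4 (by norm_num) L hμ4
      rw [hτi 2 (by norm_num)] at e2
      rw [hτi 3 (by norm_num)] at e3
      rw [hτi 4 (by norm_num)] at e4
      norm_num at e2 e3 e4
      exact rowAlg L d S x hL hdne hxSd e2 e3 e4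
  have keyall : ∀ k : Fin s, c k = L := fun k => by
    have := key k.val k.isLt
    simpa using this
  -- τ 2 is the constant vector L^2/2, contradicting bᵀ τ 2 = 0
  have ht2 : ∀ k : Fin s, τ 2 k = L ^ 2 - ((2 : ℝ))⁻¹ * L ^ 2 := by
    intro k
    have := hτconst 2 (by norm_num) k fun l _ => keyall l
    simpa using this
  have hbt : b ⬝ᵥ τ 2 = (L ^ 2 - ((2 : ℝ))⁻¹ * L ^ 2) * (b ⬝ᵥ fun _ => 1) := by
    rw [dotProduct, dotProduct, Finset.mul_sum]
    refine Finset.sum_congr rfl fun k _ => ?_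
    rw [ht2 k]
    ring
  rw [hb2, hb, mul_one] at hbt
  have : L ^ 2 = 0 := by linarith
  exact hL (pow_eq_zero_iff (n := 2) (by norm_num) |>.mp this)
end
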